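/- For the complete graph K₂ (two vertices with unit edge weight and generator Lf(x) = f(y) − f(x) for {x,y} = {1,2}), the condition CD_Υ(2,∞) holds: Ψ_{2,Υ}(f) ≥ 2Ψ_Υ(f) pointwise for all f : {1,2} → ℝ. -/

import Mathlib

/-- Jump rates of the unweighted complete graph `K₂` on two vertices. -/
def k2 : Fin 2 → Fin 2 → ℝ := fun x y => if x = y then 0 else 1

noncomputable def Ups (z : ℝ) : ℝ := Real.exp z - 1 - z

noncomputable def L2 (f : Fin 2 → ℝ) (x : Fin 2) : ℝ := ∑ y : Fin 2, k2 x y * (f y - f x)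

noncomputable def PsiUps (f : Fin 2 → ℝ) (x : Fin 2) : ℝ :=
  ∑ y : Fin 2, k2 x y * Ups (f y - f x)

noncomputable def BUps' (f g : Fin 2 → ℝ) (x : Fin 2) : ℝ :=
  ∑ y : Fin 2, k2 x y * (Real.exp (f y - f x) - 1) * (g y - g x)

noncomputable def Psi2Ups (f : Fin 2 → ℝ) (x : Fin 2) : ℝ :=
  (1 / 2) * (L2 (PsiUps f) x - BUps' f (L2 f) x)


noncomputable def gAux0 (z : ℝ) : ℝ := Real.exp (-z) + (2*z-5)*Real.exp z + 4 + 4*z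
noncomputable def gAux1 (z : ℝ) : ℝ := -Real.exp (-z) + (2*z-3)*Real.exp z + 4

lemma g2_nonneg (z : ℝ) : 0 ≤ Real.exp (-z) + (2*z-1)*Real.exp z := by
  have h1 : 1 + (-2*z) ≤ Real.exp (-2*z) := by
    have := Real.add_one_le_exp (-2*z); linarith
  have h2 : Real.exp (-z) * Real.exp (-z) = Real.exp (-2*z) := by
    rw [← Real.exp_add]; ring_nf
  have h3 : Real.exp z * Real.exp (-z) = 1 := by
    rw [← Real.exp_add]; simp
  nlinarith [Real.exp_pos (-z), Real.exp_pos z]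

lemma hasDerivAt_gAux1 (z : ℝ) :
    HasDerivAt gAux1 (Real.exp (-z) + (2*z-1)*Real.exp z) z := by
  have he : HasDerivAt (fun z : ℝ => Real.exp (-z)) (-Real.exp (-z)) z := by
    have := (hasDerivAt_neg z).exp; rw [mul_neg_one] at this; exact this
  have hp : HasDerivAt (fun z : ℝ => (2*z-3)*Real.exp z)
      (2*Real.exp z + (2*z-3)*Real.exp z) z := by
    have h1 : HasDerivAt (fun z : ℝ => 2*z-3) 2 z := by
      simpa using ((hasDerivAt_id z).const_mul 2).sub_const 3
    exact h1.mul (Real.hasDerivAt_exp z)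
  have := (he.neg.add hp).add_const 4
  refine this.congr_deriv ?_
  ring

lemma hasDerivAt_gAux0 (z : ℝ) : HasDerivAt gAux0 (gAux1 z) z := by
  have he : HasDerivAt (fun z : ℝ => Real.exp (-z)) (-Real.exp (-z)) z := by
    have := (hasDerivAt_neg z).exp; rw [mul_neg_one] at this; exact this
  have hp : HasDerivAt (fun z : ℝ => (2*z-5)*Real.exp z)
      (2*Real.exp z + (2*z-5)*Real.exp z) z := by
    have h1 : HasDerivAt (fun z : ℝ => 2*z-5) 2 z := by
      simpa using ((hasDerivAt_id z).const_mul 2).sub_const 5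
    exact h1.mul (Real.hasDerivAt_exp z)
  have hl : HasDerivAt (fun z : ℝ => 4*z) 4 z := by
    simpa using (hasDerivAt_id z).const_mul 4
  have := (((he.add hp).add_const 4).add hl)
  refine this.congr_deriv ?_
  unfold gAux1; ring

lemma gAux1_mono : Monotone gAux1 := by
  have hd : ∀ z, HasDerivAt gAux1 (Real.exp (-z) + (2*z-1)*Real.exp z) z := hasDerivAt_gAux1
  have hdiff : Differentiable ℝ gAux1 := fun z => (hd z).differentiableAt
  apply monotone_of_deriv_nonneg hdiff
  intro z
  rw [(hd z).deriv]
  exact g2_nonneg z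

lemma gAux1_zero : gAux1 0 = 0 := by norm_num [gAux1]

lemma gAux0_nonneg (z : ℝ) : 0 ≤ gAux0 z := by
  have h0 : gAux0 0 = 0 := by norm_num [gAux0]
  have hdiff : Differentiable ℝ gAux0 := fun z => (hasDerivAt_gAux0 z).differentiableAt
  rcases le_total 0 z with hz | hz
  · have hmono : MonotoneOn gAux0 (Set.Ici 0) := by
      apply monotoneOn_of_deriv_nonneg (convex_Ici 0) hdiff.continuous.continuousOn
        (hdiff.differentiableOn)
      intro x hx
      rw [(hasDerivAt_gAux0 x).deriv]
      simp only [interior_Ici, Set.mem_Ioi] at hx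
      calc (0:ℝ) = gAux1 0 := gAux1_zero.symm
        _ ≤ gAux1 x := gAux1_mono hx.le
    have := hmono Set.self_mem_Ici (by exact hz) hz
    linarith [h0 ▸ this]
  · have hanti : AntitoneOn gAux0 (Set.Iic 0) := by
      apply antitoneOn_of_deriv_nonpos (convex_Iic 0) hdiff.continuous.continuousOn
        (hdiff.differentiableOn)
      intro x hx
      rw [(hasDerivAt_gAux0 x).deriv]
      simp only [interior_Iic, Set.mem_Iio] at hx
      calc gAux1 x ≤ gAux1 0 := gAux1_mono hx.le
        _ = 0 := gAux1_zero
    have := hanti (by exact hz) Set.self_mem_Iic hz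
    linarith [h0 ▸ this]

lemma key (z : ℝ) : 4*(Real.exp z - 1 - z) ≤ Real.exp (-z) - Real.exp z + 2*z*Real.exp z := by
  have := gAux0_nonneg z
  unfold gAux0 at this
  nlinarith

/-- The complete graph `K₂` satisfies `CD_Υ(2,∞)`: `Ψ_{2,Υ}(f) ≥ 2 Ψ_Υ(f)` pointwise. -/
theorem K2_CDUps_two : ∀ f : Fin 2 → ℝ, ∀ x : Fin 2, 2 * PsiUps f x ≤ Psi2Ups f x := by
  intro f x
  fin_cases x
  · have h := key (f 1 - f 0)
    rw [neg_sub] at h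
    simp only [Psi2Ups, PsiUps, L2, BUps', k2, Ups, Fin.sum_univ_two]
    norm_num
    linarith
  · have h := key (f 0 - f 1)
    rw [neg_sub] at h
    simp only [Psi2Ups, PsiUps, L2, BUps', k2, Ups, Fin.sum_univ_two]
    norm_num
    linarith
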